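/- Let λ and μ be partitions of d. Then there exists a semistandard Young tableau of shape λ and weight μ (equivalently, the Kostka number K_{λ,μ} is nonzero) if and only if μ ⊴ λ. -/

import Mathlib

/-- A partition, encoded as a weakly decreasing, eventually zero sequence of
nonnegative integers (0-indexed: part `i+1` of the partition is `l i`). -/
def IsPartition (l : ℕ → ℕ) : Prop :=
  Antitone l ∧ ∃ N, ∀ m, N ≤ m → l m = 0

/-- `l` is a partition of `d`: weakly decreasing, eventually zero, parts summing to `d`. -/
def IsPartitionOf (d : ℕ) (l : ℕ → ℕ) : Prop :=
  Antitone l ∧ ∃ N, (∀ m, N ≤ m → l m = 0) ∧ ∑ i ∈ Finset.range N, l i = d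

/-- Dominance order: `Dominates lam mu` means `mu ⊴ lam`, i.e. every partial sum of `mu`
is at most the corresponding partial sum of `lam`. -/
def Dominates (lam mu : ℕ → ℕ) : Prop :=
  ∀ i, ∑ t ∈ Finset.range i, mu t ≤ ∑ t ∈ Finset.range i, lam t

/-- The cell in row `i`, column `j` (0-indexed) belongs to the Young diagram of `l`
iff `j < l i`.  The hook length of such a cell: 1 + #cells strictly to its right in its
row + #cells strictly above it in its column; for `j < l i` this equals
`(l i - j) + #{i' > i | j < l i'}`. -/
noncomputable def hook (l : ℕ → ℕ) (i j : ℕ) : ℕ :=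
  (l i - j) + Nat.card {i' : ℕ // i < i' ∧ j < l i'}

/-- `l` is a `(k+1)`-core: a partition none of whose cells has hook length `k+1`. -/
def IsCore (k : ℕ) (l : ℕ → ℕ) : Prop :=
  IsPartition l ∧ ∀ i j, j < l i → hook l i j ≠ k + 1

/-- The `(k+1)`-residue of the cell in row `i`, column `j`: `(j - i) mod (k+1)`. -/
def residue (k i j : ℕ) : ZMod (k + 1) :=
  (j : ZMod (k + 1)) - (i : ZMod (k + 1))

/-- `(i,j)` is a top cell of `l`: it lies in the diagram but the cell above it does not. -/
def IsTopCell (l : ℕ → ℕ) (i j : ℕ) : Prop :=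
  j < l i ∧ l (i + 1) ≤ j

/-- `(i,j)` is a removable corner of `l`: a cell with no cell above it nor to its right. -/
def IsRemovableCorner (l : ℕ → ℕ) (i j : ℕ) : Prop :=
  j + 1 = l i ∧ l (i + 1) ≤ j

/-- For top cells `c' = (i',j')` and `c = (i,j)` with `c` weakly southeast of `c'`,
`hBetween l i' j' i j` is `#{x | i ≤ x ≤ i', (x,j') ∈ l} + #{y | j'+1 ≤ y ≤ j, (i,y) ∈ l}`. -/
def hBetween (l : ℕ → ℕ) (i' j' i j : ℕ) : ℕ :=
  ((Finset.Icc i i').filter (fun x => j' < l x)).card +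
    ((Finset.Icc (j' + 1) j).filter (fun y => y < l i)).card

/-- `pMap k l i` is the number of cells in row `i` of `l` with hook length at most `k`;
the sequence `pMap k l` is `p(l)`. -/
noncomputable def pMap (k : ℕ) (l : ℕ → ℕ) (i : ℕ) : ℕ :=
  ((Finset.range (l i)).filter (fun j => hook l i j ≤ k)).card

/-- A semistandard Young tableau of shape `l`, with 0-indexed entries (entry `m`
represents the letter `m+1`): rows weakly increase, columns strictly increase,
and (as a normalization) entries outside the diagram are `0`. -/
structure SSYT (l : ℕ → ℕ) where
  entry : ℕ → ℕ → ℕ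
  rowWeak : ∀ i j, j + 1 < l i → entry i j ≤ entry i (j + 1)
  colStrict : ∀ i j, j < l (i + 1) → entry i j < entry (i + 1) j
  zero_outside : ∀ i j, l i ≤ j → entry i j = 0

/-- The weight of an SSYT: `T.weight m` is the number of cells of the diagram
whose entry is `m`. -/
noncomputable def SSYT.weight {l : ℕ → ℕ} (T : SSYT l) (m : ℕ) : ℕ :=
  Nat.card {p : ℕ × ℕ // p.2 < l p.1 ∧ T.entry p.1 p.2 = m}

/-- The `k`-weight of an SSYT: `T.kweight k m` is the number of distinct
`(k+1)`-residues among the cells whose entry is `m`. -/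
noncomputable def SSYT.kweight {l : ℕ → ℕ} (T : SSYT l) (k m : ℕ) : ℕ :=
  Nat.card {r : ZMod (k + 1) // ∃ i j, j < l i ∧ T.entry i j = m ∧ residue k i j = r}

/-- The coefficient of the monomial with exponent vector `α` in `f`. -/
noncomputable def coeffOf {n : ℕ} (f : MvPolynomial (Fin n) ℝ) (α : Fin n → ℕ) : ℝ :=
  f.coeff (Finsupp.equivFunOnFinite.symm α)

/-- `f` is the Schur polynomial of shape `l` in `x_1, …, x_n`: the coefficient of `x^α`
is the number of SSYT of shape `l` with entries among the `n` letters whose weight is `α`. -/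
def IsSchurPoly (n : ℕ) (l : ℕ → ℕ) (f : MvPolynomial (Fin n) ℝ) : Prop :=
  ∀ α : Fin n → ℕ,
    coeffOf f α =
      (Nat.card {T : SSYT l // (∀ i j, j < l i → T.entry i j < n) ∧
        ∀ m : Fin n, T.weight (m : ℕ) = α m} : ℝ)

/-- `f` is the dual `k`-Schur polynomial of shape the `(k+1)`-core `l` in `x_1, …, x_n`:
the coefficient of `x^α` is the number of SSYT of shape `l` with entries among the `n`
letters whose `k`-weight is `α`. -/
def IsDualKSchurPoly (n k : ℕ) (l : ℕ → ℕ) (f : MvPolynomial (Fin n) ℝ) : Prop :=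
  ∀ α : Fin n → ℕ,
    coeffOf f α =
      (Nat.card {T : SSYT l // (∀ i j, j < l i → T.entry i j < n) ∧
        ∀ m : Fin n, T.kweight k (m : ℕ) = α m} : ℝ)

/-- The Newton polytope of `f`: the convex hull in `ℝ^n` of the exponent vectors of the
monomials of `f` with nonzero coefficient. -/
noncomputable def newtonPolytope {n : ℕ} (f : MvPolynomial (Fin n) ℝ) : Set (Fin n → ℝ) :=
  convexHull ℝ {x | ∃ α : Fin n → ℕ, coeffOf f α ≠ 0 ∧ x = fun i => (α i : ℝ)}

/-- `f` has saturated Newton polytope: the lattice points of `Newton(f)` are exactly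
the exponent vectors of `f`. -/
def HasSNP {n : ℕ} (f : MvPolynomial (Fin n) ℝ) : Prop :=
  ∀ x : Fin n → ℝ,
    (x ∈ newtonPolytope f ∧ ∀ i, ∃ m : ℤ, x i = (m : ℝ)) ↔
      ∃ α : Fin n → ℕ, coeffOf f α ≠ 0 ∧ x = fun i => (α i : ℝ)

/-- The `λ`-permutahedron in `ℝ^n`: the convex hull of all coordinate permutations of
`(l 0, …, l (n-1))`. -/
noncomputable def permutahedron (n : ℕ) (l : ℕ → ℕ) : Set (Fin n → ℝ) :=
  convexHull ℝ {v : Fin n → ℝ | ∃ σ : Equiv.Perm (Fin n), ∀ i, v i = (l (σ i).val : ℝ)}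

/-- A subset `J ⊆ ℕ^n` is M-convex. -/
def MConvex {n : ℕ} (J : Set (Fin n → ℕ)) : Prop :=
  ∀ α ∈ J, ∀ β ∈ J, ∀ i : Fin n, β i < α i →
    ∃ j : Fin n, α j < β j ∧
      (fun t => if t = i then α t - 1 else if t = j then α t + 1 else α t) ∈ J

/-- `sort(α) ⊴ lam`: some weakly decreasing rearrangement of `α` (padded with zeros)
is dominated by `lam`. -/
def SortDominatedBy (n : ℕ) (α : Fin n → ℕ) (lam : ℕ → ℕ) : Prop :=
  ∃ β : ℕ → ℕ, Antitone β ∧ (∀ m, n ≤ m → β m = 0) ∧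
    (∃ σ : Equiv.Perm (Fin n), ∀ i : Fin n, β i = α (σ i)) ∧
    Dominates lam β

lemma weight_eq_card {lam : ℕ → ℕ} (hA : Antitone lam) {N : ℕ}
    (hN : ∀ m, N ≤ m → lam m = 0) {K M : ℕ} (hK : N ≤ K) (hM : lam 0 < M)
    (T : SSYT lam) (m : ℕ) :
    T.weight m = ((Finset.range K ×ˢ Finset.range M).filter
      (fun p => p.2 < lam p.1 ∧ T.entry p.1 p.2 = m)).card := by
  have hset : {p : ℕ × ℕ | p.2 < lam p.1 ∧ T.entry p.1 p.2 = m} =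
      ↑((Finset.range K ×ˢ Finset.range M).filter
        (fun p => p.2 < lam p.1 ∧ T.entry p.1 p.2 = m)) := by
    ext ⟨a, b⟩
    simp only [Set.mem_setOf_eq, Finset.coe_filter, Finset.mem_product, Finset.mem_range]
    constructor
    · rintro ⟨h1, h2⟩
      have ha : a < N := by
        by_contra hc
        have := hN a (le_of_not_gt hc)
        omega
      have hb : b < M := lt_of_lt_of_le h1 ((hA (Nat.zero_le a)).trans hM.le)
      exact ⟨⟨lt_of_lt_of_le ha hK, hb⟩, h1, h2⟩
    · rintro ⟨_, h⟩; exact h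
  rw [SSYT.weight, show {p : ℕ × ℕ // p.2 < lam p.1 ∧ T.entry p.1 p.2 = m} =
    ↥{p : ℕ × ℕ | p.2 < lam p.1 ∧ T.entry p.1 p.2 = m} from rfl,
    Nat.card_coe_set_eq, hset, Set.ncard_coe_finset]

lemma superstandard {lam : ℕ → ℕ} (hA : Antitone lam) {N : ℕ}
    (hN : ∀ m, N ≤ m → lam m = 0) :
    ∃ T : SSYT lam, ∀ m, T.weight m = lam m := by
  have hT : ∃ T : SSYT lam, ∀ i j, j < lam i → T.entry i j = i := by
    refine ⟨⟨fun i j => if j < lam i then i else 0, ?_, ?_, ?_⟩, ?_⟩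
    · intro i j h
      have h1 : j < lam i := by omega
      simp [h1, h]
    · intro i j h
      have h1 : j < lam i := lt_of_lt_of_le h (hA (Nat.le_succ i))
      simp [h1, h]
    · intro i j h
      simp [Nat.not_lt.2 h]
    · intro i j h
      simp [h]
  obtain ⟨T, hE⟩ := hT
  refine ⟨T, fun m => ?_⟩
  rw [weight_eq_card hA hN (le_refl N) (Nat.lt_succ_self _)]
  by_cases hm : m < N
  · have heq : (Finset.range N ×ˢ Finset.range (lam 0 + 1)).filter
        (fun p => p.2 < lam p.1 ∧ T.entry p.1 p.2 = m)
        = {m} ×ˢ Finset.range (lam m) := by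
      ext ⟨a, b⟩
      simp only [Finset.mem_filter, Finset.mem_product, Finset.mem_range,
        Finset.mem_singleton]
      constructor
      · rintro ⟨⟨_, _⟩, hb, he⟩
        rw [hE a b hb] at he
        subst he; exact ⟨rfl, hb⟩
      · rintro ⟨ha, hb⟩
        have h1 : b < lam a := by rw [ha]; exact hb
        exact ⟨⟨by omega, lt_of_lt_of_le h1 (Nat.le_succ_of_le (hA (Nat.zero_le a)))⟩,
          h1, by rw [hE a b h1, ha]⟩
    rw [heq, Finset.card_product, Finset.card_singleton, Finset.card_range, one_mul]
  · have hm0 : lam m = 0 := hN m (le_of_not_gt hm)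
    rw [hm0, Finset.card_eq_zero, Finset.filter_eq_empty_iff]
    rintro ⟨a, b⟩ hab
    simp only [Finset.mem_product, Finset.mem_range] at hab
    rintro ⟨hb, he⟩
    rw [hE a b hb] at he
    subst he
    omega

set_option maxHeartbeats 1000000 in
lemma single_step {lam : ℕ → ℕ} (hA : Antitone lam) {N : ℕ}
    (hN : ∀ m, N ≤ m → lam m = 0) (T : SSYT lam) (i : ℕ)
    (h : T.weight (i + 1) < T.weight i) :
    ∃ T' : SSYT lam, (∀ m, m ≠ i → m ≠ i + 1 → T'.weight m = T.weight m) ∧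
      T'.weight i = T.weight i - 1 ∧ T'.weight (i + 1) = T.weight (i + 1) + 1 := by
  classical
  set B := Finset.range N ×ˢ Finset.range (lam 0 + 1) with hBdef
  have hw : ∀ m, T.weight m =
      (B.filter (fun p => p.2 < lam p.1 ∧ T.entry p.1 p.2 = m)).card :=
    fun m => weight_eq_card hA hN (le_refl N) (Nat.lt_succ_self _) T m
  set F : ℕ → Finset (ℕ × ℕ) :=
    fun m => B.filter (fun p => p.2 < lam p.1 ∧ T.entry p.1 p.2 = m) with hFdef
  -- paired i-cells
  set P : Finset (ℕ × ℕ) :=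
    (F i).filter (fun p => p.2 < lam (p.1 + 1) ∧ T.entry (p.1 + 1) p.2 = i + 1) with hPdef
  have hmemB : ∀ a b : ℕ, b < lam a → (a, b) ∈ B := by
    intro a b hab
    have ha : a < N := by
      by_contra hc
      have := hN a (le_of_not_gt hc); omega
    have hb : b < lam 0 + 1 :=
      Nat.lt_succ_of_lt (lt_of_lt_of_le hab (hA (Nat.zero_le a)))
    simp [hBdef, ha]
    omega
  have hPcard : P.card ≤ (F (i + 1)).card := by
    apply Finset.card_le_card_of_injOn (fun p => (p.1 + 1, p.2))
    · intro p hp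
      simp only [Finset.mem_coe, hPdef, hFdef, Finset.mem_filter] at hp
      obtain ⟨⟨hpB, hpd, hpe⟩, hpd2, hpe2⟩ := hp
      simp only [Finset.mem_coe, hFdef, Finset.mem_filter]
      exact ⟨hmemB _ _ hpd2, hpd2, hpe2⟩
    · intro p _ q _ hpq
      simp only [Prod.mk.injEq] at hpq
      exact Prod.ext (by omega) hpq.2
  have hPF : P ⊆ F i := Finset.filter_subset _ _
  have hnsub : ¬ F i ⊆ P := by
    intro hs
    have := Finset.card_le_card hs
    rw [← hw i, ← hw (i + 1)] at *
    omega
  obtain ⟨p0, hp0F, hp0P⟩ := Finset.not_subset.1 hnsub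
  set r := p0.1 with hrdef
  set C : Finset ℕ := (Finset.range (lam r)).filter
    (fun c => T.entry r c = i ∧ ¬(c < lam (r + 1) ∧ T.entry (r + 1) c = i + 1)) with hCdef
  have hp0C : p0.2 ∈ C := by
    simp only [hFdef, Finset.mem_filter] at hp0F
    simp only [hPdef, Finset.mem_filter] at hp0P
    simp only [hCdef, Finset.mem_filter, Finset.mem_range]
    exact ⟨hp0F.2.1, hp0F.2.2, fun hc => hp0P ⟨Finset.mem_filter.2 ⟨hp0F.1, hp0F.2⟩, hc⟩⟩
  have hCne : C.Nonempty := ⟨p0.2, hp0C⟩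
  set c := C.max' hCne with hcdef
  have hcC : c ∈ C := C.max'_mem hCne
  have hc1 : c < lam r := Finset.mem_range.1 (Finset.mem_filter.1 hcC).1
  have hc2 : T.entry r c = i := (Finset.mem_filter.1 hcC).2.1
  have hc3 : ¬(c < lam (r + 1) ∧ T.entry (r + 1) c = i + 1) := (Finset.mem_filter.1 hcC).2.2
  have hRight : c + 1 < lam r → i + 1 ≤ T.entry r (c + 1) := by
    intro hcc
    have h0 : i ≤ T.entry r (c + 1) := hc2 ▸ T.rowWeak r c hcc
    by_contra hlt
    have he : T.entry r (c + 1) = i := by omega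
    have hnotC : (c + 1) ∉ C := fun hc' => absurd (C.le_max' _ hc') (by omega)
    have hpair : (c + 1) < lam (r + 1) ∧ T.entry (r + 1) (c + 1) = i + 1 := by
      by_contra hnp
      exact hnotC (Finset.mem_filter.2 ⟨Finset.mem_range.2 hcc, he, hnp⟩)
    have hcl : c < lam (r + 1) := lt_trans (Nat.lt_succ_self c) hpair.1
    have h2 : T.entry (r + 1) c ≤ i + 1 := hpair.2 ▸ T.rowWeak (r + 1) c hpair.1
    have h3 : i < T.entry (r + 1) c := hc2 ▸ T.colStrict r c hcl
    exact hc3 ⟨hcl, by omega⟩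
  have hBelow : c < lam (r + 1) → i + 2 ≤ T.entry (r + 1) c := by
    intro hcl
    have h3 : i < T.entry (r + 1) c := hc2 ▸ T.colStrict r c hcl
    have h4 : T.entry (r + 1) c ≠ i + 1 := fun he => hc3 ⟨hcl, he⟩
    omega
  -- the modified tableau
  have hex : ∃ T' : SSYT lam, ∀ a b,
      T'.entry a b = (if a = r ∧ b = c then i + 1 else T.entry a b) := by
    refine ⟨⟨fun a b => if a = r ∧ b = c then i + 1 else T.entry a b, ?_, ?_, ?_⟩,
      fun a b => rfl⟩
    · intro a b hb
      by_cases h1 : a = r ∧ b = c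
      · rw [if_pos h1, if_neg (by omega)]
        obtain ⟨ha', hb'⟩ := h1; subst ha'; subst hb'
        exact hRight hb
      · rw [if_neg h1]
        by_cases h2 : a = r ∧ b + 1 = c
        · rw [if_pos (by omega)]
          obtain ⟨ha', hb'⟩ := h2
          subst ha'
          have h3 : T.entry r b ≤ T.entry r (b + 1) := T.rowWeak r b hb
          rw [hb', hc2] at h3
          omega
        · rw [if_neg (by omega)]
          exact T.rowWeak a b hb
    · intro a b hb
      by_cases h1 : a = r ∧ b = c
      · rw [if_pos h1, if_neg (by omega)]
        obtain ⟨ha', hb'⟩ := h1; subst ha'; subst hb'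
        have := hBelow hb
        omega
      · rw [if_neg h1]
        by_cases h2 : a + 1 = r ∧ b = c
        · rw [if_pos (by omega)]
          obtain ⟨ha', hb'⟩ := h2
          have h3 : T.entry a b < T.entry (a + 1) b := T.colStrict a b hb
          rw [ha', hb', hc2] at h3
          rw [hb']
          omega
        · rw [if_neg (by omega)]
          exact T.colStrict a b hb
    · intro a b hb
      rw [if_neg (by rintro ⟨ha', hb'⟩; subst ha'; subst hb'; omega), T.zero_outside a b hb]
  obtain ⟨T', hTe⟩ := hex
  have hw' : ∀ m, T'.weight m =
      (B.filter (fun p => p.2 < lam p.1 ∧ T'.entry p.1 p.2 = m)).card :=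
    fun m => weight_eq_card hA hN (le_refl N) (Nat.lt_succ_self _) T' m
  have hrcB : (r, c) ∈ B := hmemB r c hc1
  have hrcFi : (r, c) ∈ F i := by
    simp only [hFdef, Finset.mem_filter]
    exact ⟨hrcB, hc1, hc2⟩
  refine ⟨T', ?_, ?_, ?_⟩
  · intro m hmi hmi1
    rw [hw', hw m]
    congr 1
    ext ⟨a, b⟩
    simp only [Finset.mem_filter, hTe]
    by_cases hab : a = r ∧ b = c
    · rw [if_pos hab]
      obtain ⟨ha', hb'⟩ := hab; subst ha'; subst hb'
      constructor
      · rintro ⟨_, _, h2⟩; omega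
      · rintro ⟨_, _, h2⟩; rw [hc2] at h2; omega
    · rw [if_neg hab]
  · rw [hw', hw i]
    have : B.filter (fun p => p.2 < lam p.1 ∧ T'.entry p.1 p.2 = i) = (F i).erase (r, c) := by
      ext ⟨a, b⟩
      simp only [Finset.mem_filter, Finset.mem_erase, hFdef, hTe, Prod.mk.injEq]
      by_cases hab : a = r ∧ b = c
      · rw [if_pos hab]
        obtain ⟨ha', hb'⟩ := hab; subst ha'; subst hb'
        constructor
        · rintro ⟨_, _, h2⟩; omega
        · rintro ⟨hne, _⟩; simp at hne
      · rw [if_neg hab]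
        constructor
        · rintro ⟨hB', h1, h2⟩
          exact ⟨fun hpe => hab ⟨congrArg Prod.fst hpe, congrArg Prod.snd hpe⟩, hB', h1, h2⟩
        · rintro ⟨_, hB', h1, h2⟩; exact ⟨hB', h1, h2⟩
    rw [this, Finset.card_erase_of_mem hrcFi, hFdef]
  · rw [hw', hw (i + 1)]
    have hni : (r, c) ∉ F (i + 1) := by
      simp only [hFdef, Finset.mem_filter]
      rintro ⟨_, _, h2⟩
      rw [hc2] at h2; omega
    have : B.filter (fun p => p.2 < lam p.1 ∧ T'.entry p.1 p.2 = i + 1)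
        = insert (r, c) (F (i + 1)) := by
      ext ⟨a, b⟩
      simp only [Finset.mem_filter, Finset.mem_insert, hFdef, hTe, Prod.mk.injEq]
      by_cases hab : a = r ∧ b = c
      · rw [if_pos hab]
        obtain ⟨ha', hb'⟩ := hab; subst ha'; subst hb'
        constructor
        · rintro ⟨_, _, _⟩; exact Or.inl ⟨rfl, rfl⟩
        · rintro _; exact ⟨hrcB, hc1, rfl⟩
      · rw [if_neg hab]
        constructor
        · rintro ⟨hB', h1, h2⟩; exact Or.inr ⟨hB', h1, h2⟩
        · rintro (⟨ha', hb'⟩ | ⟨hB', h1, h2⟩)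
          · exact absurd ⟨ha', hb'⟩ hab
          · exact ⟨hB', h1, h2⟩
    rw [this, Finset.card_insert_of_notMem hni, hFdef]

lemma sum_ext {f : ℕ → ℕ} {N d : ℕ} (hN : ∀ m, N ≤ m → f m = 0)
    (hs : ∑ i ∈ Finset.range N, f i = d) (R : ℕ) (hR : N ≤ R) :
    ∑ i ∈ Finset.range R, f i = d := by
  rw [← hs]
  exact (Finset.sum_subset (Finset.range_subset_range.2 hR)
    (fun x _ hx => hN x (Nat.le_of_not_lt (fun hc => hx (Finset.mem_range.2 hc))))).symm

lemma dominance_step {d : ℕ} {lam mu : ℕ → ℕ}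
    (hlam : IsPartitionOf d lam) (hmu : IsPartitionOf d mu)
    (hdom : Dominates lam mu) (hne : ¬ ∀ t, mu t = lam t) :
    ∃ (i j : ℕ) (nu : ℕ → ℕ), i < j ∧ j < d ∧ mu (j + 1) < mu j ∧
      (∀ t, nu t = if t = i then mu t + 1 else if t = j then mu t - 1 else mu t) ∧
      IsPartitionOf d nu ∧ Dominates lam nu ∧
      (∀ q, ∑ t ∈ Finset.range q, mu t ≤ ∑ t ∈ Finset.range q, nu t) ∧
      (∑ t ∈ Finset.range j, mu t < ∑ t ∈ Finset.range j, nu t) ∧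
      nu (i + 1) < nu i := by
  classical
  obtain ⟨hAmu, Nmu, hNmu, hsmu⟩ := hmu
  obtain ⟨hAlam, Nlam, hNlam, hslam⟩ := hlam
  have hex_i : ∃ t, mu t < lam t := by
    by_contra hc
    push_neg at hc
    apply hne
    intro t
    have h2 : ∀ q, ∑ t ∈ Finset.range q, mu t = ∑ t ∈ Finset.range q, lam t :=
      fun q => le_antisymm (hdom q) (Finset.sum_le_sum (fun x _ => hc x))
    have ha := h2 (t + 1)
    have hb := h2 t
    rw [Finset.sum_range_succ, Finset.sum_range_succ] at ha
    omega
  obtain ⟨i, hi, himin⟩ : ∃ i, mu i < lam i ∧ ∀ t, t < i → lam t ≤ mu t :=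
    ⟨Nat.find hex_i, Nat.find_spec hex_i, fun t ht => le_of_not_gt (Nat.find_min hex_i ht)⟩
  have heqpre : ∀ q, q ≤ i → ∑ t ∈ Finset.range q, mu t = ∑ t ∈ Finset.range q, lam t := by
    intro q hq
    exact le_antisymm (hdom q) (Finset.sum_le_sum fun x hx =>
      himin x (lt_of_lt_of_le (Finset.mem_range.1 hx) hq))
  have htermpre : ∀ t, t < i → mu t = lam t := by
    intro t ht
    have h1 := heqpre (t + 1) ht
    have h2 := heqpre t (le_of_lt ht)
    rw [Finset.sum_range_succ, Finset.sum_range_succ] at h1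
    omega
  have hstrict1 : ∑ t ∈ Finset.range (i + 1), mu t < ∑ t ∈ Finset.range (i + 1), lam t := by
    rw [Finset.sum_range_succ, Finset.sum_range_succ, heqpre i le_rfl]
    omega
  have hex_j : ∃ q, i < q ∧ (mu (q + 1) < mu q ∨
      ∑ t ∈ Finset.range (q + 1), mu t = ∑ t ∈ Finset.range (q + 1), lam t) := by
    refine ⟨i + 1 + Nmu + Nlam, by omega, Or.inr ?_⟩
    rw [sum_ext hNmu hsmu _ (by omega), sum_ext hNlam hslam _ (by omega)]
  obtain ⟨j, ⟨hij, hjdisj⟩, hjmin⟩ : ∃ j, (i < j ∧ (mu (j + 1) < mu j ∨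
      ∑ t ∈ Finset.range (j + 1), mu t = ∑ t ∈ Finset.range (j + 1), lam t)) ∧
      ∀ q, q < j → ¬(i < q ∧ (mu (q + 1) < mu q ∨
        ∑ t ∈ Finset.range (q + 1), mu t = ∑ t ∈ Finset.range (q + 1), lam t)) :=
    ⟨Nat.find hex_j, Nat.find_spec hex_j, fun q hq => Nat.find_min hex_j hq⟩
  have hstrict : ∀ q, i < q → q ≤ j →
      ∑ t ∈ Finset.range q, mu t < ∑ t ∈ Finset.range q, lam t := by
    intro q
    induction q with
    | zero => omega
    | succ q ih =>
      intro hq1 hq2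
      rcases Nat.lt_or_ge i q with hq | hq
      · have hnQ := hjmin q (by omega)
        have hne' : ∑ t ∈ Finset.range (q + 1), mu t ≠ ∑ t ∈ Finset.range (q + 1), lam t :=
          fun he => hnQ ⟨hq, Or.inr he⟩
        exact lt_of_le_of_ne (hdom (q + 1)) hne'
      · have hqi : q = i := by omega
        rw [hqi]
        exact hstrict1
  have hmuj : mu (j + 1) < mu j := by
    rcases hjdisj with h | heq
    · exact h
    · have hsj := hstrict j hij le_rfl
      have e1 : ∑ t ∈ Finset.range (j + 1), mu t = ∑ t ∈ Finset.range j, mu t + mu j :=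
        Finset.sum_range_succ mu j
      have e2 : ∑ t ∈ Finset.range (j + 1), lam t = ∑ t ∈ Finset.range j, lam t + lam j :=
        Finset.sum_range_succ lam j
      have e3 : ∑ t ∈ Finset.range (j + 2), mu t =
          ∑ t ∈ Finset.range (j + 1), mu t + mu (j + 1) := Finset.sum_range_succ mu (j + 1)
      have e4 : ∑ t ∈ Finset.range (j + 2), lam t =
          ∑ t ∈ Finset.range (j + 1), lam t + lam (j + 1) := Finset.sum_range_succ lam (j + 1)
      have h3 := hdom (j + 2)
      have h4 : lam (j + 1) ≤ lam j := hAlam (show j ≤ j + 1 by omega)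
      omega
  have hjd : j < d := by
    have hpos : ∀ t ∈ Finset.range (j + 1), 1 ≤ mu t := by
      intro t ht
      have htj : t < j + 1 := Finset.mem_range.1 ht
      have := hAmu (show t ≤ j by omega)
      omega
    have h1 : ∑ _t ∈ Finset.range (j + 1), (1 : ℕ) ≤ ∑ t ∈ Finset.range (j + 1), mu t :=
      Finset.sum_le_sum hpos
    have h2 : ∑ t ∈ Finset.range (j + 1), mu t ≤ d := by
      have h3 : ∑ t ∈ Finset.range (j + 1), mu t ≤
          ∑ t ∈ Finset.range (j + 1 + Nmu), mu t :=
        Finset.sum_le_sum_of_subset (Finset.range_subset_range.2 (by omega))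
      rw [sum_ext hNmu hsmu (j + 1 + Nmu) (by omega)] at h3
      exact h3
    simp only [Finset.sum_const, Finset.card_range, smul_eq_mul, mul_one] at h1
    omega
  set nu : ℕ → ℕ := fun t => if t = i then mu t + 1 else if t = j then mu t - 1 else mu t
    with hnudef
  have hval : ∀ t, nu t = if t = i then mu t + 1 else if t = j then mu t - 1 else mu t :=
    fun t => rfl
  have hvi : nu i = mu i + 1 := by rw [hval, if_pos rfl]
  have hvj : nu j = mu j - 1 := by rw [hval, if_neg (by omega), if_pos rfl]
  have hvo : ∀ t, t ≠ i → t ≠ j → nu t = mu t := by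
    intro t h1 h2; rw [hval, if_neg h1, if_neg h2]
  have hAnu : Antitone nu := by
    apply antitone_nat_of_succ_le
    intro t
    have hm1 : mu (t + 1) ≤ mu t := hAmu (show t ≤ t + 1 by omega)
    by_cases h2 : t = i
    · rw [h2, hvi]
      by_cases h3 : i + 1 = j
      · rw [show nu (i + 1) = mu j - 1 by rw [h3, hvj]]
        have := hAmu (le_of_lt hij)
        omega
      · rw [hvo (i + 1) (by omega) h3]
        have := hAmu (show i ≤ i + 1 by omega)
        omega
    · by_cases h1 : t + 1 = i
      · rw [hvo t h2 (by omega), h1, hvi]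
        have heq1 : mu t = lam t := htermpre t (by omega)
        have heq2 : lam i ≤ lam t := hAlam (by omega)
        omega
      · by_cases h4 : t = j
        · rw [h4, hvj, show nu (j + 1) = mu (j + 1) from hvo (j + 1) (by omega) (by omega)]
          omega
        · by_cases h3 : t + 1 = j
          · rw [h3, hvj, hvo t h2 h4]
            have := hAmu (show t ≤ j by omega)
            omega
          · rw [hvo t h2 h4, hvo (t + 1) h1 h3]
            omega
  have hS : ∀ q, ∑ t ∈ Finset.range q, nu t =
      ∑ t ∈ Finset.range q, mu t + (if i < q ∧ q ≤ j then 1 else 0) := by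
    intro q
    induction q with
    | zero => simp
    | succ q ih =>
      rw [Finset.sum_range_succ, Finset.sum_range_succ (f := mu), ih, hval q]
      by_cases h1 : q = i
      · subst h1
        split_ifs <;> omega
      · by_cases h2 : q = j
        · subst h2
          split_ifs <;> omega
        · rw [if_neg h1, if_neg h2]
          split_ifs <;> omega
  have hNnu : ∀ m, max Nmu (j + 1) ≤ m → nu m = 0 := by
    intro m hm
    rw [hvo m (by omega) (by omega)]
    exact hNmu m (by omega)
  have hsnu : ∑ t ∈ Finset.range (max Nmu (j + 1)), nu t = d := by
    rw [hS, if_neg (by omega), sum_ext hNmu hsmu _ (by omega)]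
    omega
  refine ⟨i, j, nu, hij, hjd, hmuj, hval, ⟨hAnu, max Nmu (j + 1), hNnu, hsnu⟩, ?_, ?_, ?_, ?_⟩
  · intro q
    rw [hS q]
    split_ifs with h
    · have := hstrict q h.1 h.2
      omega
    · exact hdom q
  · intro q
    rw [hS q]
    split_ifs <;> omega
  · rw [hS j, if_pos ⟨hij, le_rfl⟩]
    omega
  · rw [hvi]
    by_cases h3 : i + 1 = j
    · rw [show nu (i + 1) = mu j - 1 by rw [h3, hvj]]
      have := hAmu (le_of_lt hij)
      omega
    · rw [hvo (i + 1) (by omega) h3]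
      have := hAmu (show i ≤ i + 1 by omega)
      omega

lemma descend {lam : ℕ → ℕ} (hA : Antitone lam) {N : ℕ}
    (hN : ∀ m, N ≤ m → lam m = 0) :
    ∀ k, 1 ≤ k → ∀ (t : ℕ) (T : SSYT lam) (w : ℕ → ℕ),
      (∀ m, T.weight m = w m) → w (t + 1) < w t →
      (∀ s, t < s → s < t + k → w (s + 1) ≤ w s) →
      ∃ T' : SSYT lam, ∀ m, T'.weight m =
        if m = t then w t - 1 else if m = t + k then w (t + k) + 1 else w m := by
  intro k hk
  induction k, hk using Nat.le_induction with
  | base =>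
    intro t T w hw h1 _
    obtain ⟨T', ha, hb, hc⟩ := single_step hA hN T t (by rw [hw, hw]; exact h1)
    refine ⟨T', fun m => ?_⟩
    by_cases hm1 : m = t
    · subst hm1
      rw [if_pos rfl, hb, hw]
    · by_cases hm2 : m = t + 1
      · subst hm2
        rw [if_neg hm1, if_pos rfl, hc, hw]
      · rw [if_neg hm1, if_neg hm2, ha m hm1 hm2, hw]
  | succ k hk1 IH =>
    intro t T w hw h1 h2
    obtain ⟨T'', hT''⟩ := IH t T w hw h1 (fun s hs1 hs2 => h2 s hs1 (by omega))
    have hlt : T''.weight (t + k + 1) < T''.weight (t + k) := by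
      rw [hT'' (t + k), hT'' (t + k + 1),
        if_neg (by omega), if_pos rfl, if_neg (by omega), if_neg (by omega)]
      have := h2 (t + k) (by omega) (by omega)
      omega
    obtain ⟨T', ha, hb, hc⟩ := single_step hA hN T'' (t + k) hlt
    refine ⟨T', fun m => ?_⟩
    by_cases hm1 : m = t
    · rw [if_pos hm1, ha m (by omega) (by omega), hT'' m, if_pos hm1]
    · by_cases hm2 : m = t + (k + 1)
      · subst hm2
        rw [if_neg hm1, if_pos rfl]
        have he : t + (k + 1) = (t + k) + 1 := by omega
        rw [he] at *
        rw [hc, hT'' (t + k + 1), if_neg (by omega), if_neg (by omega)]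
      · by_cases hm3 : m = t + k
        · subst hm3
          rw [if_neg hm1, if_neg hm2, hb, hT'' (t + k), if_neg (by omega), if_pos rfl]
          omega
        · rw [if_neg hm1, if_neg hm2, ha m hm3 (by omega), hT'' m, if_neg hm1, if_neg hm3]

lemma exists_ssyt_of_dominates {d : ℕ} {lam : ℕ → ℕ} (hlam : IsPartitionOf d lam) :
    ∀ n (mu : ℕ → ℕ), IsPartitionOf d mu → Dominates lam mu →
      (∑ q ∈ Finset.range d,
        (∑ t ∈ Finset.range q, lam t - ∑ t ∈ Finset.range q, mu t)) = n →
      ∃ T : SSYT lam, ∀ m, T.weight m = mu m := by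
  intro n
  induction n using Nat.strong_induction_on with
  | _ n IHmeas =>
    intro mu hmu hdom hmeas
    by_cases hml : ∀ t, mu t = lam t
    · obtain ⟨N, hN, _⟩ := hlam.2
      obtain ⟨T, hT⟩ := superstandard hlam.1 hN
      exact ⟨T, fun m => (hT m).trans (hml m).symm⟩
    · obtain ⟨i, j, nu, hij, hjd, hmuj, hval, hnuP, hnuD, hle, hltj, hdec⟩ :=
        dominance_step hlam hmu hdom hml
      have hmeas' : ∑ q ∈ Finset.range d,
          (∑ t ∈ Finset.range q, lam t - ∑ t ∈ Finset.range q, nu t) < n := by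
        rw [← hmeas]
        apply Finset.sum_lt_sum
        · intro q _
          have h1 := hle q
          omega
        · refine ⟨j, Finset.mem_range.2 hjd, ?_⟩
          have h1 := hltj
          have h2 := hnuD j
          omega
      obtain ⟨T, hT⟩ := IHmeas _ hmeas' nu hnuP hnuD rfl
      obtain ⟨N, hN, _⟩ := hlam.2
      obtain ⟨T', hT'⟩ := descend hlam.1 hN (j - i) (by omega) i T nu hT hdec
        (fun s _ _ => hnuP.1 (show s ≤ s + 1 by omega))
      refine ⟨T', fun m => ?_⟩
      rw [hT' m, show i + (j - i) = j from by omega]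
      by_cases hmi : m = i
      · rw [if_pos hmi, hval i, if_pos rfl, hmi]
        omega
      · by_cases hmj : m = j
        · rw [if_neg hmi, if_pos hmj, hval j, if_neg (by omega), if_pos rfl, hmj]
          omega
        · rw [if_neg hmi, if_neg hmj, hval m, if_neg hmi, if_neg hmj]

lemma row_le_entry {lam : ℕ → ℕ} (hA : Antitone lam) (T : SSYT lam) :
    ∀ r c, c < lam r → r ≤ T.entry r c := by
  intro r
  induction r with
  | zero => intro c _; exact Nat.zero_le _
  | succ r ih =>
    intro c hc
    have hc' : c < lam r := lt_of_lt_of_le hc (hA (show r ≤ r + 1 by omega))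
    have h1 := T.colStrict r c hc
    have h2 := ih c hc'
    omega

lemma sum_weight_filter {lam : ℕ → ℕ} (T : SSYT lam) (B : Finset (ℕ × ℕ)) :
    ∀ q, ∑ t ∈ Finset.range q,
        (B.filter (fun p => p.2 < lam p.1 ∧ T.entry p.1 p.2 = t)).card
      = (B.filter (fun p => p.2 < lam p.1 ∧ T.entry p.1 p.2 < q)).card := by
  intro q
  induction q with
  | zero => simp
  | succ q ih =>
    rw [Finset.sum_range_succ, ih]
    have hsplit : B.filter (fun p => p.2 < lam p.1 ∧ T.entry p.1 p.2 < q + 1)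
        = B.filter (fun p => p.2 < lam p.1 ∧ T.entry p.1 p.2 < q)
          ∪ B.filter (fun p => p.2 < lam p.1 ∧ T.entry p.1 p.2 = q) := by
      rw [← Finset.filter_or]
      apply Finset.filter_congr
      intro p _
      constructor
      · rintro ⟨h1, h2⟩
        rcases Nat.lt_or_ge (T.entry p.1 p.2) q with h | h
        · exact Or.inl ⟨h1, h⟩
        · exact Or.inr ⟨h1, by omega⟩
      · rintro (⟨h1, h2⟩ | ⟨h1, h2⟩) <;> exact ⟨h1, by omega⟩
    rw [hsplit, Finset.card_union_of_disjoint]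
    simp only [Finset.disjoint_left, Finset.mem_filter]
    rintro p ⟨_, _, h2⟩ ⟨_, _, h4⟩
    omega

lemma card_rows {lam : ℕ → ℕ} (hA : Antitone lam) :
    ∀ q K M, q ≤ K → lam 0 < M →
    ((Finset.range K ×ˢ Finset.range M).filter
        (fun p => p.2 < lam p.1 ∧ p.1 < q)).card
      = ∑ t ∈ Finset.range q, lam t := by
  intro q
  induction q with
  | zero => intro K M _ _; simp
  | succ q ih =>
    intro K M hK hM
    rw [Finset.sum_range_succ, ← ih K M (by omega) hM]
    have hsplit : (Finset.range K ×ˢ Finset.range M).filter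
          (fun p => p.2 < lam p.1 ∧ p.1 < q + 1)
        = (Finset.range K ×ˢ Finset.range M).filter
            (fun p => p.2 < lam p.1 ∧ p.1 < q)
          ∪ {q} ×ˢ Finset.range (lam q) := by
      ext ⟨a, b⟩
      simp only [Finset.mem_union, Finset.mem_filter, Finset.mem_product,
        Finset.mem_range, Finset.mem_singleton]
      constructor
      · rintro ⟨⟨h1, h2⟩, h3, h4⟩
        rcases Nat.lt_or_ge a q with h | h
        · exact Or.inl ⟨⟨h1, h2⟩, h3, h⟩
        · have : a = q := by omega
          subst this
          exact Or.inr ⟨rfl, h3⟩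
      · rintro (⟨⟨h1, h2⟩, h3, h4⟩ | ⟨h1, h2⟩)
        · exact ⟨⟨h1, h2⟩, h3, by omega⟩
        · subst h1
          refine ⟨⟨by omega, ?_⟩, h2, by omega⟩
          have : lam a ≤ lam 0 := hA (Nat.zero_le a)
          omega
    rw [hsplit, Finset.card_union_of_disjoint, Finset.card_product,
      Finset.card_singleton, Finset.card_range, one_mul]
    simp only [Finset.disjoint_left, Finset.mem_filter, Finset.mem_product,
      Finset.mem_singleton, Finset.mem_range]
    rintro ⟨a, b⟩ ⟨_, _, h2⟩ ⟨h3, _⟩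
    omega

lemma dominates_of_ssyt {lam mu : ℕ → ℕ}
    (hA : Antitone lam) {N : ℕ} (hN : ∀ m, N ≤ m → lam m = 0)
    (T : SSYT lam) (hT : ∀ m, T.weight m = mu m) :
    ∀ q, ∑ t ∈ Finset.range q, mu t ≤ ∑ t ∈ Finset.range q, lam t := by
  intro q
  set K := N + q with hK
  set M := lam 0 + 1 with hM
  set B := Finset.range K ×ˢ Finset.range M with hB
  have h1 : ∑ t ∈ Finset.range q, mu t =
      (B.filter (fun p => p.2 < lam p.1 ∧ T.entry p.1 p.2 < q)).card := by
    rw [← sum_weight_filter T B q]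
    apply Finset.sum_congr rfl
    intro t _
    rw [← hT t]
    exact weight_eq_card hA hN (by omega) (by omega) T t
  have h2 : (B.filter (fun p => p.2 < lam p.1 ∧ T.entry p.1 p.2 < q)).card ≤
      (B.filter (fun p => p.2 < lam p.1 ∧ p.1 < q)).card := by
    apply Finset.card_le_card
    intro p hp
    rw [Finset.mem_filter] at hp ⊢
    obtain ⟨hpB, hp1, hp2⟩ := hp
    have := row_le_entry hA T p.1 p.2 hp1
    exact ⟨hpB, hp1, by omega⟩
  have h3 := card_rows hA q K M (by omega) (by omega)
  rw [← hB] at h3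
  omega

/-- there exists an SSYT of shape `lam` and weight `mu`
(equivalently `K_{lam,mu} ≠ 0`) iff `mu ⊴ lam`. -/
theorem exists_ssyt_iff_dominates
    (d : ℕ) (lam mu : ℕ → ℕ) (hlam : IsPartitionOf d lam) (hmu : IsPartitionOf d mu) :
    (∃ T : SSYT lam, ∀ m, T.weight m = mu m) ↔ Dominates lam mu := by
  constructor
  · rintro ⟨T, hT⟩
    intro q
    obtain ⟨hA, N, hN, _⟩ := hlam
    exact dominates_of_ssyt hA hN T hT q
  · intro hdom
    exact exists_ssyt_of_dominates hlam _ mu hmu hdom rfl
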